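/- The pair (x,p) is incentive compatible if and only if ∫_V [f(x(v),v) − c₂·p(v)] dρ(v) ≥ C and there exists a constant r ≥ 0 such that, with the surrogate outcome ũ(q) := u*(q) + r·f*(q) and surrogate utility Ũ(v) := ⟨ũ(x(v)), v⟩ − (c₁ + r·c₂)·p(v): (i) Ũ is differentiable on the interior V̊ of V with ∇Ũ(v) = ũ(x(v)) for every v ∈ V̊; (ii) Ũ(v') − Ũ(v) ≤ ⟨ũ(x(v')), v' − v⟩ for all v, v' ∈ V (i.e., Ũ is convex); and (iii) if r > 0 then the ex-ante constraint is binding under truthful reporting. -/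

import Mathlib

open MeasureTheory Set

/-- Incentive compatibility of the interim rule pair `(x, p)` for a player with ex-ante
constraint level `C`: truthful reporting satisfies the ex-ante constraint, and any (measurable,
kernel-like) report strategy `s` whose ex-ante utility and constraint value exist either yields
no more utility than truth-telling or violates the ex-ante constraint. -/
def IncentiveCompatible {d D : ℕ} (V : Set (EuclideanSpace ℝ (Fin d)))
    (ρ : Measure (EuclideanSpace ℝ (Fin d)))
    (u f : EuclideanSpace ℝ (Fin D) → EuclideanSpace ℝ (Fin d) → ℝ)
    (x : EuclideanSpace ℝ (Fin d) → EuclideanSpace ℝ (Fin D))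
    (p : EuclideanSpace ℝ (Fin d) → ℝ) (c₁ c₂ C : ℝ) : Prop :=
  (∫ v in V, (f (x v) v - c₂ * p v) ∂ρ) ≥ C ∧
  ∀ s : EuclideanSpace ℝ (Fin d) → Measure (EuclideanSpace ℝ (Fin d)),
    Measurable s →
    (∀ v ∈ V, IsProbabilityMeasure (s v)) →
    (∀ v ∈ V, s v Vᶜ = 0) →
    (∀ v ∈ V, IntegrableOn (fun v' => u (x v') v - c₁ * p v') V (s v)) →
    (∀ v ∈ V, IntegrableOn (fun v' => f (x v') v - c₂ * p v') V (s v)) →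
    IntegrableOn (fun v => ∫ v' in V, (u (x v') v - c₁ * p v') ∂(s v)) V ρ →
    IntegrableOn (fun v => ∫ v' in V, (f (x v') v - c₂ * p v') ∂(s v)) V ρ →
    ((∫ v in V, (∫ v' in V, (u (x v') v - c₁ * p v') ∂(s v)) ∂ρ) ≤
        (∫ v in V, (u (x v) v - c₁ * p v) ∂ρ) ∨
      (∫ v in V, (∫ v' in V, (f (x v') v - c₂ * p v') ∂(s v)) ∂ρ) < C)

open scoped RealInnerProductSpace

/-- The surrogate outcome `ũ(q) = u*(q) + r·f*(q)`. -/
noncomputable def surrogateOutcome {d D : ℕ}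
    (ustar fstar : EuclideanSpace ℝ (Fin D) → EuclideanSpace ℝ (Fin d)) (r : ℝ)
    (q : EuclideanSpace ℝ (Fin D)) : EuclideanSpace ℝ (Fin d) :=
  ustar q + r • fstar q

/-- The surrogate utility `Ũ(v) = ⟨ũ(x(v)), v⟩ − (c₁ + r·c₂)·p(v)`. -/
noncomputable def surrogateUtility {d D : ℕ}
    (ustar fstar : EuclideanSpace ℝ (Fin D) → EuclideanSpace ℝ (Fin d))
    (x : EuclideanSpace ℝ (Fin d) → EuclideanSpace ℝ (Fin D))
    (p : EuclideanSpace ℝ (Fin d) → ℝ) (c₁ c₂ r : ℝ)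
    (v : EuclideanSpace ℝ (Fin d)) : ℝ :=
  ⟪surrogateOutcome ustar fstar r (x v), v⟫ - (c₁ + r * c₂) * p v


open MeasureTheory Set Filter Topology
open scoped RealInnerProductSpace

private lemma aux_ae_le_of_setIntegral {α : Type*} [MeasurableSpace α]
    (μ : Measure α) [IsFiniteMeasure μ] {V : Set α} (hV : MeasurableSet V)
    {g h : α → ℝ} (hg : IntegrableOn g V μ) (hh : IntegrableOn h V μ)
    (H : ∀ A : Set α, MeasurableSet A → ∫ v in A ∩ V, g v ∂μ ≤ ∫ v in A ∩ V, h v ∂μ) :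
    ∀ᵐ v ∂(μ.restrict V), g v ≤ h v := by
  have key : 0 ≤ᵐ[μ.restrict V] fun v => h v - g v := by
    apply ae_nonneg_of_forall_setIntegral_nonneg (hh.sub hg)
    intro A hA _
    rw [Measure.restrict_restrict hA]
    have heq : ∫ v in A ∩ V, (fun v => h v - g v) v ∂μ
        = (∫ v in A ∩ V, h v ∂μ) - ∫ v in A ∩ V, g v ∂μ :=
      integral_sub (hh.mono_set inter_subset_right) (hg.mono_set inter_subset_right)
    simp only [Pi.sub_apply]
    rw [heq]
    linarith [H A hA]
  filter_upwards [key] with v hv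
  simp only [Pi.zero_apply] at hv
  linarith

private lemma aux_gradient_of_convex {d : ℕ} {V : Set (EuclideanSpace ℝ (Fin d))}
    {U : EuclideanSpace ℝ (Fin d) → ℝ} {g : EuclideanSpace ℝ (Fin d) → EuclideanSpace ℝ (Fin d)}
    {v : EuclideanSpace ℝ (Fin d)} (hv : v ∈ interior V) (hgc : ContinuousAt g v)
    (H : ∀ a ∈ V, ∀ b ∈ V, U b - U a ≤ ⟪g b, b - a⟫) :
    HasGradientAt U (g v) v := by
  rw [hasGradientAt_iff_hasFDerivAt, hasFDerivAt_iff_isLittleO_nhds_zero]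
  rw [Asymptotics.isLittleO_iff]
  intro ε hε
  have hvV : v ∈ V := interior_subset hv
  have h1 : ∀ᶠ w : EuclideanSpace ℝ (Fin d) in 𝓝 0, v + w ∈ interior V := by
    have hcont : Continuous fun w : EuclideanSpace ℝ (Fin d) => v + w :=
      continuous_const.add continuous_id
    have := hcont.tendsto 0
    simp only [add_zero] at this
    exact this.eventually (isOpen_interior.eventually_mem hv)
  have h2 : ∀ᶠ w : EuclideanSpace ℝ (Fin d) in 𝓝 0, ‖g (v + w) - g v‖ ≤ ε := by
    have hc : ContinuousAt (fun w : EuclideanSpace ℝ (Fin d) => g (v + w)) 0 := by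
      apply ContinuousAt.comp
      · simpa using hgc
      · exact (continuous_const.add continuous_id).continuousAt
    have ht : Tendsto (fun w : EuclideanSpace ℝ (Fin d) => g (v + w) - g v) (𝓝 0) (𝓝 0) := by
      have := hc.tendsto
      simp only [add_zero] at this
      simpa using this.sub_const (g v)
    exact (ht.eventually (Metric.closedBall_mem_nhds 0 hε)).mono fun w hw => by
      simpa [dist_eq_norm] using hw
  filter_upwards [h1, h2] with w hw1 hw2
  have hwV : v + w ∈ V := interior_subset hw1
  have hub := H v hvV (v + w) hwV
  have hlb := H (v + w) hwV v hvV
  simp only [add_sub_cancel_left] at hub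
  have hvw : v - (v + w) = -w := by abel
  rw [hvw, inner_neg_right] at hlb
  -- hlb : U v - U (v+w) ≤ -⟪g v, w⟫ , so 0 ≤ U (v+w) - U v - ⟪g v, w⟫
  have key1 : (0:ℝ) ≤ U (v + w) - U v - ⟪g v, w⟫ := by linarith
  have key2 : U (v + w) - U v - ⟪g v, w⟫ ≤ ⟪g (v + w) - g v, w⟫ := by
    rw [inner_sub_left]; linarith
  have key3 : ⟪g (v + w) - g v, w⟫ ≤ ε * ‖w‖ := by
    calc ⟪g (v + w) - g v, w⟫ ≤ ‖g (v + w) - g v‖ * ‖w‖ := real_inner_le_norm _ _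
    _ ≤ ε * ‖w‖ := mul_le_mul_of_nonneg_right hw2 (norm_nonneg _)
  show ‖U (v + w) - U v - (InnerProductSpace.toDual ℝ _) (g v) w‖ ≤ ε * ‖w‖
  rw [InnerProductSpace.toDual_apply_apply]
  rw [Real.norm_eq_abs, abs_le]
  constructor
  · nlinarith [norm_nonneg w, mul_nonneg hε.le (norm_nonneg w)]
  · linarith


open MeasureTheory Set Filter Topology
open scoped RealInnerProductSpace ENNReal

-- dirac kernels: admissibility pieces and inner-integral values
private lemma aux_dirac_pack {α : Type*} [MeasurableSpace α] [MeasurableSingletonClass α]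
    {V : Set α} (hVm : MeasurableSet V)
    (g : α → α) (hg : Measurable g) (hmap : MapsTo g V V) (G : α → α → ℝ) :
    Measurable (fun v => Measure.dirac (g v)) ∧
    (∀ v ∈ V, IsProbabilityMeasure (Measure.dirac (g v))) ∧
    (∀ v ∈ V, Measure.dirac (g v) Vᶜ = 0) ∧
    (∀ v ∈ V, IntegrableOn (fun v' => G v v') V (Measure.dirac (g v))) ∧
    (∀ v ∈ V, (∫ v' in V, G v v' ∂(Measure.dirac (g v))) = G v (g v)) := by
  classical
  refine ⟨Measure.measurable_dirac.comp hg, fun v _ => inferInstance, ?_, ?_, ?_⟩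
  · intro v hv
    rw [Measure.dirac_apply]
    exact indicator_of_notMem (by simp [hmap hv]) _
  · intro v hv
    rw [IntegrableOn, restrict_dirac, if_pos (hmap hv)]
    exact (integrable_const (G v (g v))).congr (ae_eq_dirac (G v)).symm
  · intro v hv
    rw [setIntegral_dirac, if_pos (hmap hv)]

-- mixture kernels
private lemma aux_mix_meas {α : Type*} [MeasurableSpace α] {s₁ s₂ : α → Measure α}
    (h₁ : Measurable s₁) (h₂ : Measurable s₂) (a b : ℝ≥0∞) :
    Measurable fun v => a • s₁ v + b • s₂ v := by
  apply Measure.measurable_of_measurable_coe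
  intro t ht
  simp only [Measure.coe_add, Measure.coe_smul, Pi.add_apply, Pi.smul_apply, smul_eq_mul]
  exact (((Measure.measurable_coe ht).comp h₁).const_mul a).add
    (((Measure.measurable_coe ht).comp h₂).const_mul b)

private lemma aux_mix_prob {α : Type*} [MeasurableSpace α] {μ ν : Measure α}
    (h₁ : IsProbabilityMeasure μ) (h₂ : IsProbabilityMeasure ν) {a b : ℝ≥0∞} (hab : a + b = 1) :
    IsProbabilityMeasure (a • μ + b • ν) := by
  constructor
  simp [measure_univ, hab]

private lemma aux_mix_null {α : Type*} [MeasurableSpace α] {μ ν : Measure α} {t : Set α}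
    (h₁ : μ t = 0) (h₂ : ν t = 0) (a b : ℝ≥0∞) : (a • μ + b • ν) t = 0 := by
  simp [h₁, h₂]

private lemma aux_mix_integrableOn {α : Type*} [MeasurableSpace α] {μ ν : Measure α} {V : Set α}
    {F : α → ℝ} (h₁ : IntegrableOn F V μ) (h₂ : IntegrableOn F V ν) (a b : ℝ≥0∞)
    (ha : a ≠ ⊤) (hb : b ≠ ⊤) : IntegrableOn F V (a • μ + b • ν) := by
  rw [IntegrableOn, Measure.restrict_add, Measure.restrict_smul, Measure.restrict_smul]
  exact (h₁.smul_measure ha).add_measure (h₂.smul_measure hb)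

private lemma aux_mix_setIntegral {α : Type*} [MeasurableSpace α] {μ ν : Measure α} {V : Set α}
    {F : α → ℝ} (h₁ : IntegrableOn F V μ) (h₂ : IntegrableOn F V ν) (a b : ℝ)
    (ha : 0 ≤ a) (hb : 0 ≤ b) :
    ∫ v in V, F v ∂(ENNReal.ofReal a • μ + ENNReal.ofReal b • ν)
      = a * ∫ v in V, F v ∂μ + b * ∫ v in V, F v ∂ν := by
  rw [Measure.restrict_add, Measure.restrict_smul, Measure.restrict_smul,
    integral_add_measure (h₁.smul_measure ENNReal.ofReal_ne_top)
      (h₂.smul_measure ENNReal.ofReal_ne_top),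
    integral_smul_measure, integral_smul_measure, ENNReal.toReal_ofReal ha,
    ENNReal.toReal_ofReal hb, smul_eq_mul, smul_eq_mul]

set_option maxHeartbeats 2000000 in
/-- Theorem 3 (ic-iff): the payment-identity characterization of incentive compatibility
for quasi-linear player models. -/
theorem incentiveCompatible_iff_surrogate {d D : ℕ}
    (V : Set (EuclideanSpace ℝ (Fin d))) (Q : Set (EuclideanSpace ℝ (Fin D)))
    (hVc : IsCompact V) (hQc : IsCompact Q)
    (ρ : Measure (EuclideanSpace ℝ (Fin d))) [IsProbabilityMeasure ρ] (hρV : ρ Vᶜ = 0)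
    (u f : EuclideanSpace ℝ (Fin D) → EuclideanSpace ℝ (Fin d) → ℝ)
    (x : EuclideanSpace ℝ (Fin d) → EuclideanSpace ℝ (Fin D))
    (p : EuclideanSpace ℝ (Fin d) → ℝ)
    (hu : ContinuousOn (fun qv : EuclideanSpace ℝ (Fin D) × EuclideanSpace ℝ (Fin d) =>
      u qv.1 qv.2) (Q ×ˢ V))
    (hf : ContinuousOn (fun qv : EuclideanSpace ℝ (Fin D) × EuclideanSpace ℝ (Fin d) =>
      f qv.1 qv.2) (Q ×ˢ V))
    (hx : ContinuousOn x V) (hxQ : MapsTo x V Q) (hp : ContinuousOn p V)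
    (c₁ c₂ : ℝ) (hc₁ : c₁ = 0 ∨ c₁ = 1) (hc₂ : c₂ = 0 ∨ c₂ = 1) (C : ℝ)
    (hbdry : ρ (frontier V) = 0)
    (hpdiff : ∀ v ∈ interior V, DifferentiableAt ℝ p v)
    (uhat fhat : EuclideanSpace ℝ (Fin d) → EuclideanSpace ℝ (Fin d))
    (huhat : ∀ v ∈ interior V,
      HasGradientAt (fun v' => u (x v') v - c₁ * p v') (uhat v) v)
    (hfhat : ∀ v ∈ interior V,
      HasGradientAt (fun v' => f (x v') v - c₂ * p v') (fhat v) v)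
    (ustar fstar : EuclideanSpace ℝ (Fin D) → EuclideanSpace ℝ (Fin d))
    (hustarc : ContinuousOn ustar Q) (hfstarc : ContinuousOn fstar Q)
    (hulin : ∀ q ∈ Q, ∀ v ∈ V, u q v = ⟪ustar q, v⟫)
    (hflin : ∀ q ∈ Q, ∀ v ∈ V, f q v = ⟪fstar q, v⟫)
    (hustardiff : ∀ v ∈ interior V, DifferentiableAt ℝ (fun w => ustar (x w)) v)
    (hfstardiff : ∀ v ∈ interior V, DifferentiableAt ℝ (fun w => fstar (x w)) v)
    (hconn : IsConnected V)
    (hdense : ∀ E : Set (EuclideanSpace ℝ (Fin d)), E ⊆ V → ρ E = 1 → V ⊆ closure E)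
    (hfne : ∃ E : Set (EuclideanSpace ℝ (Fin d)), E ⊆ V ∧ 0 < ρ E ∧ ∀ v ∈ E, fhat v ≠ 0)
    (huhatc : ContinuousOn uhat V) (hfhatc : ContinuousOn fhat V)
    :
    IncentiveCompatible V ρ u f x p c₁ c₂ C ↔
      ((∫ v in V, (f (x v) v - c₂ * p v) ∂ρ) ≥ C ∧
        ∃ r : ℝ, 0 ≤ r ∧
          (∀ v ∈ interior V,
            HasGradientAt (surrogateUtility ustar fstar x p c₁ c₂ r)
              (surrogateOutcome ustar fstar r (x v)) v) ∧
          (∀ v ∈ V, ∀ v' ∈ V,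
            surrogateUtility ustar fstar x p c₁ c₂ r v' -
                surrogateUtility ustar fstar x p c₁ c₂ r v ≤
              ⟪surrogateOutcome ustar fstar r (x v'), v' - v⟫) ∧
          (0 < r → (∫ v in V, (f (x v) v - c₂ * p v) ∂ρ) = C)
) := by
  classical
  have hVcl : IsClosed V := hVc.isClosed
  have hVm : MeasurableSet V := hVcl.measurableSet
  have hxv : ContinuousOn (fun v => (x v, v)) V := hx.prodMk continuousOn_id
  have hxvQ : ∀ v ∈ V, (x v, v) ∈ Q ×ˢ V := fun v hv => ⟨hxQ hv, hv⟩
  have hgUc : ContinuousOn (fun v => u (x v) v - c₁ * p v) V :=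
    (hu.comp hxv hxvQ).sub (continuousOn_const.mul hp)
  have hgFc : ContinuousOn (fun v => f (x v) v - c₂ * p v) V :=
    (hf.comp hxv hxvQ).sub (continuousOn_const.mul hp)
  have hgUi : IntegrableOn (fun v => u (x v) v - c₁ * p v) V ρ := hgUc.integrableOn_compact hVc
  have hgFi : IntegrableOn (fun v => f (x v) v - c₂ * p v) V ρ := hgFc.integrableOn_compact hVc
  have hρV1 : ρ V = 1 := by
    have h := measure_add_measure_compl (μ := ρ) hVm
    rw [hρV, add_zero, measure_univ] at h
    exact h
  -- the surrogate outcome composed with x, as a function of the report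
  have hsoc : ∀ r : ℝ, ContinuousOn
      (fun w => surrogateOutcome ustar fstar r (x w)) V := by
    intro r
    simp only [surrogateOutcome]
    exact (hustarc.comp hx hxQ).add ((hfstarc.comp hx hxQ).const_smul r)
  have hUtc : ∀ r : ℝ, ContinuousOn (surrogateUtility ustar fstar x p c₁ c₂ r) V := by
    intro r
    show ContinuousOn
      (fun v => ⟪surrogateOutcome ustar fstar r (x v), v⟫ - (c₁ + r * c₂) * p v) V
    exact ((hsoc r).inner continuousOn_id).sub (continuousOn_const.mul hp)
  -- linear expansions on V
  have hW_eq : ∀ r : ℝ, ∀ w ∈ V, ∀ v ∈ V,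
      ⟪surrogateOutcome ustar fstar r (x w), v⟫ - (c₁ + r * c₂) * p w
        = (u (x w) v - c₁ * p w) + r * (f (x w) v - c₂ * p w) := by
    intro r w hw v hv
    simp only [surrogateOutcome]
    rw [inner_add_left, real_inner_smul_left, ← hulin _ (hxQ hw) v hv, ← hflin _ (hxQ hw) v hv]
    ring
  have hUt_eq : ∀ r : ℝ, ∀ v ∈ V, surrogateUtility ustar fstar x p c₁ c₂ r v
      = (u (x v) v - c₁ * p v) + r * (f (x v) v - c₂ * p v) := by
    intro r v hv
    have := hW_eq r v hv v hv
    simpa [surrogateUtility] using this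
  constructor
  · -- forward direction
    rintro ⟨hC, hIC⟩
    refine ⟨hC, ?_⟩
    set U₀ := ∫ v in V, (u (x v) v - c₁ * p v) ∂ρ with hU₀def
    set F₀ := ∫ v in V, (f (x v) v - c₂ * p v) ∂ρ with hF₀def
    set Adm : (EuclideanSpace ℝ (Fin d) → Measure (EuclideanSpace ℝ (Fin d))) → Prop :=
      fun s => Measurable s ∧ (∀ v ∈ V, IsProbabilityMeasure (s v)) ∧ (∀ v ∈ V, s v Vᶜ = 0) ∧
        (∀ v ∈ V, IntegrableOn (fun v' => u (x v') v - c₁ * p v') V (s v)) ∧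
        (∀ v ∈ V, IntegrableOn (fun v' => f (x v') v - c₂ * p v') V (s v)) ∧
        IntegrableOn (fun v => ∫ v' in V, (u (x v') v - c₁ * p v') ∂(s v)) V ρ ∧
        IntegrableOn (fun v => ∫ v' in V, (f (x v') v - c₂ * p v') ∂(s v)) V ρ with hAdmdef
    set UU : (EuclideanSpace ℝ (Fin d) → Measure (EuclideanSpace ℝ (Fin d))) → ℝ :=
      fun s => ∫ v in V, (∫ v' in V, (u (x v') v - c₁ * p v') ∂(s v)) ∂ρ with hUUdef
    set FF : (EuclideanSpace ℝ (Fin d) → Measure (EuclideanSpace ℝ (Fin d))) → ℝ :=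
      fun s => ∫ v in V, (∫ v' in V, (f (x v') v - c₂ * p v') ∂(s v)) ∂ρ with hFFdef
    have hIC' : ∀ s, Adm s → UU s ≤ U₀ ∨ FF s < C := by
      intro s hs
      obtain ⟨h1, h2, h3, h4, h5, h6, h7⟩ := hs
      exact hIC s h1 h2 h3 h4 h5 h6 h7
    -- deterministic (dirac) kernels
    have hdet : ∀ g : EuclideanSpace ℝ (Fin d) → EuclideanSpace ℝ (Fin d),
        Measurable g → MapsTo g V V →
        IntegrableOn (fun v => u (x (g v)) v - c₁ * p (g v)) V ρ →
        IntegrableOn (fun v => f (x (g v)) v - c₂ * p (g v)) V ρ →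
        Adm (fun v => Measure.dirac (g v)) ∧
        UU (fun v => Measure.dirac (g v)) = ∫ v in V, (u (x (g v)) v - c₁ * p (g v)) ∂ρ ∧
        FF (fun v => Measure.dirac (g v)) = ∫ v in V, (f (x (g v)) v - c₂ * p (g v)) ∂ρ := by
      intro g hg hmap hIU hIF
      obtain ⟨m1, m2, m3, m4, m5⟩ :=
        aux_dirac_pack hVm g hg hmap (fun v v' => u (x v') v - c₁ * p v')
      obtain ⟨_, _, _, n4, n5⟩ :=
        aux_dirac_pack hVm g hg hmap (fun v v' => f (x v') v - c₂ * p v')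
      have hoU : IntegrableOn
          (fun v => ∫ v' in V, (u (x v') v - c₁ * p v') ∂(Measure.dirac (g v))) V ρ :=
        hIU.congr_fun (fun v hv => (m5 v hv).symm) hVm
      have hoF : IntegrableOn
          (fun v => ∫ v' in V, (f (x v') v - c₂ * p v') ∂(Measure.dirac (g v))) V ρ :=
        hIF.congr_fun (fun v hv => (n5 v hv).symm) hVm
      refine ⟨⟨m1, m2, m3, m4, n4, hoU, hoF⟩, ?_, ?_⟩
      · exact setIntegral_congr_fun hVm (fun v hv => m5 v hv)
      · exact setIntegral_congr_fun hVm (fun v hv => n5 v hv)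
    have htruth : Adm (fun v => Measure.dirac v) ∧
        UU (fun v => Measure.dirac v) = U₀ ∧ FF (fun v => Measure.dirac v) = F₀ :=
      hdet id measurable_id (mapsTo_id V) hgUi hgFi
    -- mixtures
    have hmix : ∀ s₁ s₂, Adm s₁ → Adm s₂ → ∀ a b : ℝ, 0 ≤ a → 0 ≤ b → a + b = 1 →
        Adm (fun v => ENNReal.ofReal a • s₁ v + ENNReal.ofReal b • s₂ v) ∧
        UU (fun v => ENNReal.ofReal a • s₁ v + ENNReal.ofReal b • s₂ v)
          = a * UU s₁ + b * UU s₂ ∧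
        FF (fun v => ENNReal.ofReal a • s₁ v + ENNReal.ofReal b • s₂ v)
          = a * FF s₁ + b * FF s₂ := by
      intro s₁ s₂ hs₁ hs₂ a b ha hb hab
      obtain ⟨p1, p2, p3, p4, p5, p6, p7⟩ := hs₁
      obtain ⟨q1, q2, q3, q4, q5, q6, q7⟩ := hs₂
      have hab' : ENNReal.ofReal a + ENNReal.ofReal b = 1 := by
        rw [← ENNReal.ofReal_add ha hb, hab, ENNReal.ofReal_one]
      have innerU : ∀ v ∈ V,
          (∫ v' in V, (u (x v') v - c₁ * p v')
              ∂(ENNReal.ofReal a • s₁ v + ENNReal.ofReal b • s₂ v))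
            = a * (∫ v' in V, (u (x v') v - c₁ * p v') ∂(s₁ v))
              + b * (∫ v' in V, (u (x v') v - c₁ * p v') ∂(s₂ v)) :=
        fun v hv => aux_mix_setIntegral (p4 v hv) (q4 v hv) a b ha hb
      have innerF : ∀ v ∈ V,
          (∫ v' in V, (f (x v') v - c₂ * p v')
              ∂(ENNReal.ofReal a • s₁ v + ENNReal.ofReal b • s₂ v))
            = a * (∫ v' in V, (f (x v') v - c₂ * p v') ∂(s₁ v))
              + b * (∫ v' in V, (f (x v') v - c₂ * p v') ∂(s₂ v)) :=
        fun v hv => aux_mix_setIntegral (p5 v hv) (q5 v hv) a b ha hb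
      have hcombU : IntegrableOn (fun v =>
          a * (∫ v' in V, (u (x v') v - c₁ * p v') ∂(s₁ v))
            + b * (∫ v' in V, (u (x v') v - c₁ * p v') ∂(s₂ v))) V ρ :=
        (p6.const_mul a).add (q6.const_mul b)
      have hcombF : IntegrableOn (fun v =>
          a * (∫ v' in V, (f (x v') v - c₂ * p v') ∂(s₁ v))
            + b * (∫ v' in V, (f (x v') v - c₂ * p v') ∂(s₂ v))) V ρ :=
        (p7.const_mul a).add (q7.const_mul b)
      have hoU : IntegrableOn (fun v => ∫ v' in V, (u (x v') v - c₁ * p v')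
          ∂(ENNReal.ofReal a • s₁ v + ENNReal.ofReal b • s₂ v)) V ρ :=
        IntegrableOn.congr_fun hcombU (fun v hv => (innerU v hv).symm) hVm
      have hoF : IntegrableOn (fun v => ∫ v' in V, (f (x v') v - c₂ * p v')
          ∂(ENNReal.ofReal a • s₁ v + ENNReal.ofReal b • s₂ v)) V ρ :=
        IntegrableOn.congr_fun hcombF (fun v hv => (innerF v hv).symm) hVm
      refine ⟨⟨aux_mix_meas p1 q1 _ _,
          fun v hv => aux_mix_prob (p2 v hv) (q2 v hv) hab',
          fun v hv => aux_mix_null (p3 v hv) (q3 v hv) _ _,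
          fun v hv => aux_mix_integrableOn (p4 v hv) (q4 v hv) _ _
            ENNReal.ofReal_ne_top ENNReal.ofReal_ne_top,
          fun v hv => aux_mix_integrableOn (p5 v hv) (q5 v hv) _ _
            ENNReal.ofReal_ne_top ENNReal.ofReal_ne_top, hoU, hoF⟩, ?_, ?_⟩
      · calc UU (fun v => ENNReal.ofReal a • s₁ v + ENNReal.ofReal b • s₂ v)
            = ∫ v in V, (a * (∫ v' in V, (u (x v') v - c₁ * p v') ∂(s₁ v))
                + b * (∫ v' in V, (u (x v') v - c₁ * p v') ∂(s₂ v))) ∂ρ :=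
              setIntegral_congr_fun hVm (fun v hv => innerU v hv)
          _ = a * UU s₁ + b * UU s₂ := by
              rw [integral_add (p6.const_mul a) (q6.const_mul b),
                integral_const_mul, integral_const_mul]
      · calc FF (fun v => ENNReal.ofReal a • s₁ v + ENNReal.ofReal b • s₂ v)
            = ∫ v in V, (a * (∫ v' in V, (f (x v') v - c₂ * p v') ∂(s₁ v))
                + b * (∫ v' in V, (f (x v') v - c₂ * p v') ∂(s₂ v))) ∂ρ :=
              setIntegral_congr_fun hVm (fun v hv => innerF v hv)
          _ = a * FF s₁ + b * FF s₂ := by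
              rw [integral_add (p7.const_mul a) (q7.const_mul b),
                integral_const_mul, integral_const_mul]
    -- existence of the Lagrange multiplier
    have master : ∃ r : ℝ, 0 ≤ r ∧ (0 < r → F₀ = C) ∧
        ∀ s, Adm s → UU s + r * FF s ≤ U₀ + r * F₀ := by
      rcases eq_or_lt_of_le (hC : C ≤ F₀) with hbind | hFgt
      · -- binding case
        have hexF : ∃ s, Adm s ∧ C < FF s := by
          obtain ⟨E₀, hE₀V, hE₀pos, hE₀ne⟩ := hfne
          have hIpos : (E₀ ∩ interior V).Nonempty := by
            by_contra hemp
            rw [not_nonempty_iff_eq_empty] at hemp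
            have hsub : E₀ ⊆ frontier V := by
              intro v hv
              rw [hVcl.frontier_eq]
              refine ⟨hE₀V hv, fun hI => ?_⟩
              exact (eq_empty_iff_forall_notMem.mp hemp v) ⟨hv, hI⟩
            exact (ne_of_gt hE₀pos) (measure_mono_null hsub hbdry)
          obtain ⟨v₀, hv₀E, hv₀I⟩ := hIpos
          have hene : fhat v₀ ≠ 0 := hE₀ne v₀ hv₀E
          have hGrad := hfhat v₀ hv₀I
          have hline : HasDerivAt
              (fun t : ℝ => f (x (v₀ + t • fhat v₀)) v₀ - c₂ * p (v₀ + t • fhat v₀))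
              ⟪fhat v₀, fhat v₀⟫ 0 := by
            have h1 : HasFDerivAt (fun w => f (x w) v₀ - c₂ * p w)
                ((InnerProductSpace.toDual ℝ _) (fhat v₀)) v₀ :=
              hasGradientAt_iff_hasFDerivAt.mp hGrad
            have h2 : HasDerivAt (fun t : ℝ => v₀ + t • fhat v₀) (fhat v₀) 0 := by
              simpa using ((hasDerivAt_id (0 : ℝ)).smul_const (fhat v₀)).const_add v₀
            have h1' : HasFDerivAt (fun w => f (x w) v₀ - c₂ * p w)
                ((InnerProductSpace.toDual ℝ _) (fhat v₀)) ((fun t : ℝ => v₀ + t • fhat v₀) 0) := by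
              simpa using h1
            have h3 := h1'.comp_hasDerivAt (0 : ℝ) h2
            simpa [Function.comp_def, InnerProductSpace.toDual_apply_apply] using h3
          have hIP : (0:ℝ) < ⟪fhat v₀, fhat v₀⟫ := by
            rw [real_inner_self_eq_norm_mul_norm]
            exact mul_pos (norm_pos_iff.mpr hene) (norm_pos_iff.mpr hene)
          have hslope := hasDerivAt_iff_tendsto_slope.mp hline
          have hpos_ev : ∀ᶠ t in 𝓝[≠] (0:ℝ),
              0 < slope (fun t : ℝ => f (x (v₀ + t • fhat v₀)) v₀
                - c₂ * p (v₀ + t • fhat v₀)) 0 t :=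
            hslope.eventually (eventually_gt_nhds hIP)
          have hmem_ev : ∀ᶠ t in 𝓝[≠] (0:ℝ), v₀ + t • fhat v₀ ∈ interior V := by
            have hcont2 : Continuous (fun t : ℝ => v₀ + t • fhat v₀) :=
              continuous_const.add (continuous_id.smul continuous_const)
            have htend : Tendsto (fun t : ℝ => v₀ + t • fhat v₀) (𝓝 0) (𝓝 v₀) := by
              have h := hcont2.tendsto 0
              simpa using h
            exact (htend.eventually (isOpen_interior.eventually_mem hv₀I)).filter_mono
              nhdsWithin_le_nhds
          have hIoi : 𝓝[Set.Ioi (0:ℝ)] 0 ≤ 𝓝[≠] (0:ℝ) :=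
            nhdsWithin_mono 0 (fun y hy => ne_of_gt hy)
          obtain ⟨t, ⟨hslopet, hmemt⟩, htpos⟩ :=
            (((hpos_ev.and hmem_ev).filter_mono hIoi).and eventually_mem_nhdsWithin).exists
          have htpos' : (0:ℝ) < t := htpos
          have hG0 : 0 < (f (x (v₀ + t • fhat v₀)) v₀ - c₂ * p (v₀ + t • fhat v₀))
              - (f (x v₀) v₀ - c₂ * p v₀) := by
            rw [slope_def_field] at hslopet
            rcases div_pos_iff.mp hslopet with ⟨hn, _⟩ | ⟨_, hd⟩
            · simpa using hn
            · simp only [sub_zero] at hd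
              linarith
          set sh : EuclideanSpace ℝ (Fin d) → EuclideanSpace ℝ (Fin d) :=
            fun v => v + t • fhat v₀ with hshdef
          have hshc : Continuous sh := continuous_id.add continuous_const
          have hshm : Measurable sh := measurable_id.add_const _
          set G : EuclideanSpace ℝ (Fin d) → ℝ :=
            fun v => (f (x (sh v)) v - c₂ * p (sh v)) - (f (x v) v - c₂ * p v) with hGdef
          set N : Set (EuclideanSpace ℝ (Fin d)) := interior V ∩ sh ⁻¹' (interior V) with hNdef
          have hNopen : IsOpen N := isOpen_interior.inter (isOpen_interior.preimage hshc)
          have hv₀N : v₀ ∈ N := ⟨hv₀I, hmemt⟩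
          have hNV : N ⊆ V := fun v hv => interior_subset hv.1
          have hNsh : MapsTo sh N V := fun v hv => interior_subset hv.2
          have hGcont : ContinuousOn G N := by
            have hc1 : ContinuousOn (fun v => f (x (sh v)) v) N :=
              hf.comp ((hx.comp hshc.continuousOn hNsh).prodMk continuousOn_id)
                (fun v hv => ⟨hxQ (hNsh hv), hNV hv⟩)
            have hc2 : ContinuousOn (fun v => p (sh v)) N := hp.comp hshc.continuousOn hNsh
            have hc3 : ContinuousOn (fun v => f (x v) v - c₂ * p v) N := hgFc.mono hNV
            exact (hc1.sub (continuousOn_const.mul hc2)).sub hc3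
          have hGv₀ : 0 < G v₀ := by
            simpa [hGdef, hshdef] using hG0
          have hOopen : IsOpen (N ∩ G ⁻¹' (Ioi 0)) :=
            hGcont.isOpen_inter_preimage hNopen isOpen_Ioi
          obtain ⟨η, hη, hball⟩ := Metric.nhds_basis_closedBall.mem_iff.mp
            (hOopen.mem_nhds ⟨hv₀N, hGv₀⟩)
          set B := Metric.ball v₀ η with hBdef
          have hBcb : B ⊆ Metric.closedBall v₀ η := Metric.ball_subset_closedBall
          have hBopen : IsOpen B := Metric.isOpen_ball
          have hBm : MeasurableSet B := hBopen.measurableSet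
          have hBO : B ⊆ N ∩ G ⁻¹' (Ioi 0) := fun v hv => hball (hBcb hv)
          have hBV : B ⊆ V := fun v hv => hNV (hBO hv).1
          have hρB : 0 < ρ B := by
            by_contra hcon
            push_neg at hcon
            have hB0 : ρ B = 0 := le_antisymm (by simpa using hcon) zero_le
            have h1 : ρ ((V \ B)ᶜ) = 0 := by
              refine measure_mono_null ?_ (measure_union_null hρV hB0)
              intro w hw
              by_cases hwV : w ∈ V
              · right
                by_contra hwB
                exact hw ⟨hwV, hwB⟩
              · exact Or.inl hwV
            have h2 : ρ (V \ B) = 1 := by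
              have hh := measure_add_measure_compl (μ := ρ) (hVm.diff hBm)
              rw [h1, add_zero, measure_univ] at hh
              exact hh
            have h4 := hdense (V \ B) diff_subset h2 (interior_subset hv₀I)
            rw [(hVcl.sdiff hBopen).closure_eq] at h4
            exact h4.2 (Metric.mem_ball_self hη)
          obtain ⟨z, hz, hzmin⟩ := (isCompact_closedBall v₀ η).exists_isMinOn
            (Metric.nonempty_closedBall.mpr hη.le) (hGcont.mono (fun w hw => (hball hw).1))
          have hz0 : 0 < G z := (hball hz).2
          set g : EuclideanSpace ℝ (Fin d) → EuclideanSpace ℝ (Fin d) :=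
            fun v => if v ∈ B then sh v else v with hgdef2
          have hgm : Measurable g := Measurable.ite hBm hshm measurable_id
          have hgmap : MapsTo g V V := by
            intro v hv
            by_cases h : v ∈ B
            · have hmem := interior_subset (hBO h).1.2
              simpa [hgdef2, h] using hmem
            · simpa [hgdef2, h] using hv
          set T : Set (EuclideanSpace ℝ (Fin d)) := V ∩ sh ⁻¹' V with hTdef
          have hTc : IsCompact T := hVc.inter_right (hVcl.preimage hshc)
          have hTV : T ⊆ V := inter_subset_left
          have hTsh : MapsTo sh T V := fun v hv => hv.2
          have hBT : B ⊆ T := by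
            intro v hv
            have hmem : sh v ∈ interior V := (hBO hv).1.2
            refine ⟨hBV hv, ?_⟩
            rw [Set.mem_preimage]
            exact interior_subset hmem
          have hψUc : ContinuousOn (fun v => u (x (sh v)) v - c₁ * p (sh v)) T := by
            have hc1 : ContinuousOn (fun v => u (x (sh v)) v) T :=
              hu.comp ((hx.comp hshc.continuousOn hTsh).prodMk continuousOn_id)
                (fun v hv => ⟨hxQ (hTsh hv), hTV hv⟩)
            exact hc1.sub (continuousOn_const.mul (hp.comp hshc.continuousOn hTsh))
          have hψFc : ContinuousOn (fun v => f (x (sh v)) v - c₂ * p (sh v)) T := by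
            have hc1 : ContinuousOn (fun v => f (x (sh v)) v) T :=
              hf.comp ((hx.comp hshc.continuousOn hTsh).prodMk continuousOn_id)
                (fun v hv => ⟨hxQ (hTsh hv), hTV hv⟩)
            exact hc1.sub (continuousOn_const.mul (hp.comp hshc.continuousOn hTsh))
          have hψUi : IntegrableOn (fun v => u (x (sh v)) v - c₁ * p (sh v)) T ρ :=
            hψUc.integrableOn_compact hTc
          have hψFi : IntegrableOn (fun v => f (x (sh v)) v - c₂ * p (sh v)) T ρ :=
            hψFc.integrableOn_compact hTc
          have hVBsub : V ∩ B ⊆ T := fun v hv => hBT hv.2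
          have hIU : IntegrableOn (fun v => u (x (g v)) v - c₁ * p (g v)) V ρ := by
            have h1 : IntegrableOn (fun v => u (x (g v)) v - c₁ * p (g v)) (V ∩ B) ρ :=
              (hψUi.mono_set hVBsub).congr_fun (fun v hv => by simp [hgdef2, hv.2]) (hVm.inter hBm)
            have h2 : IntegrableOn (fun v => u (x (g v)) v - c₁ * p (g v)) (V \ B) ρ :=
              (hgUi.mono_set diff_subset).congr_fun (fun v hv => by simp [hgdef2, hv.2]) (hVm.diff hBm)
            have h3 := integrableOn_union.mpr ⟨h1, h2⟩
            rwa [inter_union_diff] at h3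
          have hIF : IntegrableOn (fun v => f (x (g v)) v - c₂ * p (g v)) V ρ := by
            have h1 : IntegrableOn (fun v => f (x (g v)) v - c₂ * p (g v)) (V ∩ B) ρ :=
              (hψFi.mono_set hVBsub).congr_fun (fun v hv => by simp [hgdef2, hv.2]) (hVm.inter hBm)
            have h2 : IntegrableOn (fun v => f (x (g v)) v - c₂ * p (g v)) (V \ B) ρ :=
              (hgFi.mono_set diff_subset).congr_fun (fun v hv => by simp [hgdef2, hv.2]) (hVm.diff hBm)
            have h3 := integrableOn_union.mpr ⟨h1, h2⟩
            rwa [inter_union_diff] at h3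
          obtain ⟨hAdmg, hUg, hFg⟩ := hdet g hgm hgmap hIU hIF
          refine ⟨_, hAdmg, ?_⟩
          rw [hFg, hbind]
          have hdiffeq : ∀ v, (f (x (g v)) v - c₂ * p (g v)) - (f (x v) v - c₂ * p v)
              = B.indicator G v := by
            intro v
            by_cases h : v ∈ B
            · simp [hgdef2, hGdef, h]
            · simp [hgdef2, h]
          have hsub2 : (∫ v in V, (f (x (g v)) v - c₂ * p (g v)) ∂ρ) - F₀
              = ∫ v in V, B.indicator G v ∂ρ := by
            rw [← integral_sub hIF hgFi]
            exact setIntegral_congr_fun hVm (fun v _ => hdiffeq v)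
          rw [setIntegral_indicator hBm] at hsub2
          have hVB : V ∩ B = B := inter_eq_self_of_subset_right hBV
          rw [hVB] at hsub2
          have hGiB : IntegrableOn G B ρ :=
            (hψFi.mono_set hBT).sub (hgFi.mono_set hBV)
          have hlow : ∀ v ∈ B, G z ≤ G v := fun v hv => (isMinOn_iff.mp hzmin) v (hBcb hv)
          have hmono := setIntegral_mono_on
            (integrableOn_const (measure_ne_top ρ B)) hGiB hBm hlow
          rw [setIntegral_const, smul_eq_mul] at hmono
          have htoR : 0 < (ρ B).toReal :=
            ENNReal.toReal_pos (ne_of_gt hρB) (measure_ne_top ρ B)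
          have hprod := mul_pos htoR hz0
          have hreal : ρ.real B = (ρ B).toReal := rfl
          rw [hreal] at hmono
          linarith [hprod, hmono, hsub2]

        obtain ⟨s₂, hs₂, hFs₂⟩ := hexF
        have hUs₂ : UU s₂ ≤ U₀ := by
          rcases hIC' s₂ hs₂ with h | h
          · exact h
          · linarith
        have hratio : ∀ s, Adm s → FF s < C → U₀ < UU s → ∀ s', Adm s' → C < FF s' →
            (UU s - U₀) / (C - FF s) ≤ (U₀ - UU s') / (FF s' - C) := by
          intro s hs hF hU s' hs' hF'
          have hden1 : 0 < C - FF s := by linarith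
          have hden2 : 0 < FF s' - C := by linarith
          have hD : 0 < FF s' - FF s := by linarith
          obtain ⟨hAdmM, hUM, hFM⟩ := hmix s s' hs hs'
            ((FF s' - C) / (FF s' - FF s)) (1 - (FF s' - C) / (FF s' - FF s))
            (le_of_lt (div_pos hden2 hD)) (by rw [sub_nonneg, div_le_one hD]; linarith)
            (by ring)
          have hlD : (FF s' - C) / (FF s' - FF s) * (FF s' - FF s) = FF s' - C :=
            div_mul_cancel₀ _ (ne_of_gt hD)
          have hFMC : FF (fun v => ENNReal.ofReal ((FF s' - C) / (FF s' - FF s)) • s v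
              + ENNReal.ofReal (1 - (FF s' - C) / (FF s' - FF s)) • s' v) = C := by
            rw [hFM]
            linarith [hlD]
          rcases hIC' _ hAdmM with h | h
          · rw [hUM] at h
            rw [div_le_div_iff₀ hden1 hden2]
            have h4 := mul_le_mul_of_nonneg_right h (le_of_lt hD)
            have e1 : (FF s' - C) / (FF s' - FF s) * (FF s' - FF s) * UU s
                = (FF s' - C) * UU s := by rw [hlD]
            have e2 : (FF s' - C) / (FF s' - FF s) * (FF s' - FF s) * UU s'
                = (FF s' - C) * UU s' := by rw [hlD]
            nlinarith [h4, e1, e2]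
          · rw [hFMC] at h
            exact absurd h (lt_irrefl C)
        set S : Set ℝ := insert 0
          {t | ∃ s, Adm s ∧ FF s < C ∧ U₀ < UU s ∧ t = (UU s - U₀) / (C - FF s)} with hSdef
        have hSne : S.Nonempty := ⟨0, mem_insert _ _⟩
        have hub₂ : ∀ t ∈ S, t ≤ max 0 ((U₀ - UU s₂) / (FF s₂ - C)) := by
          intro t ht
          rcases mem_insert_iff.mp ht with h0 | hmem
          · rw [h0]; exact le_max_left _ _
          · obtain ⟨s, hs, hF, hU, ht'⟩ := hmem
            rw [ht']
            exact le_max_of_le_right (hratio s hs hF hU s₂ hs₂ hFs₂)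
        have hbdd : BddAbove S := ⟨_, fun t ht => hub₂ t ht⟩
        refine ⟨sSup S, le_csSup hbdd (mem_insert _ _), fun _ => hbind.symm, ?_⟩
        intro s hs
        rw [← hbind]
        have hr0' : 0 ≤ sSup S := le_csSup hbdd (mem_insert _ _)
        rcases lt_trichotomy (FF s) C with hlt | heq | hgt
        · rcases le_or_gt (UU s) U₀ with hU | hU
          · have := mul_le_mul_of_nonneg_left (le_of_lt hlt) hr0'
            linarith
          · have hmem : (UU s - U₀) / (C - FF s) ∈ S :=
              mem_insert_of_mem _ ⟨s, hs, hlt, hU, rfl⟩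
            have hle := le_csSup hbdd hmem
            rw [div_le_iff₀ (by linarith)] at hle
            linarith
        · have hU : UU s ≤ U₀ := by
            rcases hIC' s hs with h | h
            · exact h
            · linarith
          rw [heq]
          linarith
        · have hU : UU s ≤ U₀ := by
            rcases hIC' s hs with h | h
            · exact h
            · linarith
          have hub : ∀ t ∈ S, t ≤ (U₀ - UU s) / (FF s - C) := by
            intro t ht
            rcases mem_insert_iff.mp ht with h0 | hmem
            · rw [h0]
              exact div_nonneg (by linarith) (by linarith)
            · obtain ⟨s', hs', hF', hU', ht'⟩ := hmem
              rw [ht']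
              exact hratio s' hs' hF' hU' s hs hgt
          have hle := csSup_le hSne hub
          rw [le_div_iff₀ (by linarith)] at hle
          linarith
      · -- non-binding case : r = 0
        refine ⟨0, le_rfl, fun h => absurd h (lt_irrefl 0), ?_⟩
        intro s hs
        simp only [zero_mul, add_zero]
        rcases lt_or_ge (FF s) C with hlt | hge
        · have hd1 : 0 < F₀ - C := by linarith
          have hd2 : 0 < C - FF s := by linarith
          have hden : 0 < (F₀ - C) + (C - FF s) := by linarith
          set a := (F₀ - C) / ((F₀ - C) + (C - FF s)) with hadef
          have ha0 : 0 < a := div_pos hd1 hden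
          have ha1 : a ≤ 1 := by rw [hadef, div_le_one hden]; linarith
          obtain ⟨hAdmM, hUM, hFM⟩ := hmix s (fun v => Measure.dirac v) hs htruth.1
            a (1 - a) ha0.le (by linarith) (by ring)
          rw [htruth.2.1] at hUM
          rw [htruth.2.2] at hFM
          have haD : a * ((F₀ - C) + (C - FF s)) = F₀ - C :=
            div_mul_cancel₀ _ (ne_of_gt hden)
          have hFMC : FF (fun v => ENNReal.ofReal a • s v
              + ENNReal.ofReal (1 - a) • Measure.dirac v) = C := by
            rw [hFM]
            linarith [haD]
          rcases hIC' _ hAdmM with h | h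
          · rw [hUM] at h
            by_contra hcon
            push_neg at hcon
            nlinarith [mul_pos ha0 (sub_pos.mpr hcon), h]
          · rw [hFMC] at h
            exact absurd h (lt_irrefl C)
        · rcases hIC' s hs with h | h
          · exact h
          · linarith
    obtain ⟨r, hr0, hrbind, hmaster⟩ := master
    -- pointwise surrogate incentive compatibility
    have hΨc : ContinuousOn
        (fun v => (u (x v) v - c₁ * p v) + r * (f (x v) v - c₂ * p v)) V :=
      hgUc.add (continuousOn_const.mul hgFc)
    have hΨi : IntegrableOn
        (fun v => (u (x v) v - c₁ * p v) + r * (f (x v) v - c₂ * p v)) V ρ :=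
      hgUi.add (hgFi.const_mul r)
    have hae : ∀ w ∈ V, ∀ᵐ v ∂(ρ.restrict V),
        ⟪surrogateOutcome ustar fstar r (x w), v⟫ - (c₁ + r * c₂) * p w
          ≤ (u (x v) v - c₁ * p v) + r * (f (x v) v - c₂ * p v) := by
      intro w hw
      refine aux_ae_le_of_setIntegral ρ hVm
        (((continuous_const.inner continuous_id).sub continuous_const).continuousOn.integrableOn_compact hVc)
        hΨi ?_
      intro A hA
      set g : EuclideanSpace ℝ (Fin d) → EuclideanSpace ℝ (Fin d) :=
        fun v => if v ∈ A then w else v with hgdef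
      have hgm : Measurable g := Measurable.ite hA measurable_const measurable_id
      have hgmap : MapsTo g V V := by
        intro v hv
        by_cases h : v ∈ A
        · simpa [hgdef, h] using hw
        · simpa [hgdef, h] using hv
      have hcUw : ContinuousOn (fun v => u (x w) v - c₁ * p w) V :=
        (hu.comp (continuousOn_const.prodMk continuousOn_id)
          (fun v hv => ⟨hxQ hw, hv⟩)).sub continuousOn_const
      have hcFw : ContinuousOn (fun v => f (x w) v - c₂ * p w) V :=
        (hf.comp (continuousOn_const.prodMk continuousOn_id)
          (fun v hv => ⟨hxQ hw, hv⟩)).sub continuousOn_const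
      have hIU : IntegrableOn (fun v => u (x (g v)) v - c₁ * p (g v)) V ρ := by
        have h1 : IntegrableOn (fun v => u (x (g v)) v - c₁ * p (g v)) (V ∩ A) ρ :=
          ((hcUw.integrableOn_compact hVc).mono_set inter_subset_left).congr_fun
            (fun v hv => by simp [hgdef, hv.2]) (hVm.inter hA)
        have h2 : IntegrableOn (fun v => u (x (g v)) v - c₁ * p (g v)) (V \ A) ρ :=
          (hgUi.mono_set diff_subset).congr_fun
            (fun v hv => by simp [hgdef, hv.2]) (hVm.diff hA)
        have h3 := integrableOn_union.mpr ⟨h1, h2⟩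
        rwa [inter_union_diff] at h3
      have hIF : IntegrableOn (fun v => f (x (g v)) v - c₂ * p (g v)) V ρ := by
        have h1 : IntegrableOn (fun v => f (x (g v)) v - c₂ * p (g v)) (V ∩ A) ρ :=
          ((hcFw.integrableOn_compact hVc).mono_set inter_subset_left).congr_fun
            (fun v hv => by simp [hgdef, hv.2]) (hVm.inter hA)
        have h2 : IntegrableOn (fun v => f (x (g v)) v - c₂ * p (g v)) (V \ A) ρ :=
          (hgFi.mono_set diff_subset).congr_fun
            (fun v hv => by simp [hgdef, hv.2]) (hVm.diff hA)
        have h3 := integrableOn_union.mpr ⟨h1, h2⟩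
        rwa [inter_union_diff] at h3
      obtain ⟨hAdmg, hUg, hFg⟩ := hdet g hgm hgmap hIU hIF
      have hm := hmaster _ hAdmg
      rw [hUg, hFg] at hm
      have hcombg : (∫ v in V, (u (x (g v)) v - c₁ * p (g v)) ∂ρ)
            + r * (∫ v in V, (f (x (g v)) v - c₂ * p (g v)) ∂ρ)
          = ∫ v in V, ((u (x (g v)) v - c₁ * p (g v))
            + r * (f (x (g v)) v - c₂ * p (g v))) ∂ρ := by
        rw [integral_add hIU (hIF.const_mul r), integral_const_mul]
      have hcombt : U₀ + r * F₀
          = ∫ v in V, ((u (x v) v - c₁ * p v) + r * (f (x v) v - c₂ * p v)) ∂ρ := by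
        rw [integral_add hgUi (hgFi.const_mul r), integral_const_mul]
      rw [hcombg, hcombt] at hm
      have hWgi : IntegrableOn (fun v => (u (x (g v)) v - c₁ * p (g v))
          + r * (f (x (g v)) v - c₂ * p (g v))) V ρ := hIU.add (hIF.const_mul r)
      have hdisj : Disjoint (V ∩ A) (V \ A) :=
        disjoint_left.mpr fun v hv1 hv2 => hv2.2 hv1.2
      have hsplitg : (∫ v in V, ((u (x (g v)) v - c₁ * p (g v))
            + r * (f (x (g v)) v - c₂ * p (g v))) ∂ρ)
          = (∫ v in V ∩ A, ((u (x (g v)) v - c₁ * p (g v))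
              + r * (f (x (g v)) v - c₂ * p (g v))) ∂ρ)
            + ∫ v in V \ A, ((u (x (g v)) v - c₁ * p (g v))
              + r * (f (x (g v)) v - c₂ * p (g v))) ∂ρ := by
        rw [← setIntegral_union hdisj (hVm.diff hA)
          (hWgi.mono_set inter_subset_left) (hWgi.mono_set diff_subset), inter_union_diff]
      have hsplitt : (∫ v in V, ((u (x v) v - c₁ * p v) + r * (f (x v) v - c₂ * p v)) ∂ρ)
          = (∫ v in V ∩ A, ((u (x v) v - c₁ * p v) + r * (f (x v) v - c₂ * p v)) ∂ρ)
            + ∫ v in V \ A, ((u (x v) v - c₁ * p v) + r * (f (x v) v - c₂ * p v)) ∂ρ := by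
        rw [← setIntegral_union hdisj (hVm.diff hA)
          (hΨi.mono_set inter_subset_left) (hΨi.mono_set diff_subset), inter_union_diff]
      rw [hsplitg, hsplitt] at hm
      have heq2 : (∫ v in V \ A, ((u (x (g v)) v - c₁ * p (g v))
            + r * (f (x (g v)) v - c₂ * p (g v))) ∂ρ)
          = ∫ v in V \ A, ((u (x v) v - c₁ * p v) + r * (f (x v) v - c₂ * p v)) ∂ρ :=
        setIntegral_congr_fun (hVm.diff hA) (fun v hv => by simp [hgdef, hv.2])
      rw [heq2] at hm
      have heq1 : (∫ v in V ∩ A, ((u (x (g v)) v - c₁ * p (g v))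
            + r * (f (x (g v)) v - c₂ * p (g v))) ∂ρ)
          = ∫ v in V ∩ A,
              (⟪surrogateOutcome ustar fstar r (x w), v⟫ - (c₁ + r * c₂) * p w) ∂ρ :=
        setIntegral_congr_fun (hVm.inter hA) (fun v hv => by
          have hgv : g v = w := by simp [hgdef, hv.2]
          rw [hgv, hW_eq r w hw v hv.1])
      rw [heq1] at hm
      rw [inter_comm A V]
      linarith
    -- countable dense subset and upgrade from a.e. to everywhere
    obtain ⟨Dset, hDV, hDc, hDd⟩ := hVc.isSeparable.exists_countable_dense_subset
    have haeD : ∀ᵐ v ∂(ρ.restrict V), ∀ w, w ∈ Dset →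
        ⟪surrogateOutcome ustar fstar r (x w), v⟫ - (c₁ + r * c₂) * p w
          ≤ (u (x v) v - c₁ * p v) + r * (f (x v) v - c₂ * p v) :=
      (ae_ball_iff hDc).mpr (fun w hw => hae w (hDV hw))
    rw [ae_iff] at haeD
    have hNnull : ρ ({v | ¬ ∀ w, w ∈ Dset →
        ⟪surrogateOutcome ustar fstar r (x w), v⟫ - (c₁ + r * c₂) * p w
          ≤ (u (x v) v - c₁ * p v) + r * (f (x v) v - c₂ * p v)} ∩ V) = 0 := by
      rw [← Measure.restrict_apply' hVm]
      exact haeD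
    set Eset := V \ {v | ¬ ∀ w, w ∈ Dset →
        ⟪surrogateOutcome ustar fstar r (x w), v⟫ - (c₁ + r * c₂) * p w
          ≤ (u (x v) v - c₁ * p v) + r * (f (x v) v - c₂ * p v)} with hEdef
    have hEsub : Eset ⊆ V := diff_subset
    have hE1 : ρ Eset = 1 := by
      have h1 := measure_diff_null (s := V) hNnull
      rw [diff_inter_self_eq_diff] at h1
      rw [hEdef, h1, hρV1]
    have hEprop : ∀ v ∈ Eset, ∀ w ∈ Dset,
        ⟪surrogateOutcome ustar fstar r (x w), v⟫ - (c₁ + r * c₂) * p w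
          ≤ (u (x v) v - c₁ * p v) + r * (f (x v) v - c₂ * p v) := by
      intro v hv w hw
      exact (not_not.mp hv.2) w hw
    have hVclE : V ⊆ closure Eset := hdense Eset hEsub hE1
    have hE2 : ∀ v ∈ Eset, ∀ w ∈ V,
        ⟪surrogateOutcome ustar fstar r (x w), v⟫ - (c₁ + r * c₂) * p w
          ≤ (u (x v) v - c₁ * p v) + r * (f (x v) v - c₂ * p v) := by
      intro v hv w hw
      have hcw : ContinuousWithinAt (fun w' =>
          ⟪surrogateOutcome ustar fstar r (x w'), v⟫ - (c₁ + r * c₂) * p w') Dset w := by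
        have hcV : ContinuousOn (fun w' =>
            ⟪surrogateOutcome ustar fstar r (x w'), v⟫ - (c₁ + r * c₂) * p w') V :=
          ((hsoc r).inner continuousOn_const).sub (continuousOn_const.mul hp)
        exact (hcV w hw).mono hDV
      haveI : (𝓝[Dset] w).NeBot := mem_closure_iff_nhdsWithin_neBot.mp (hDd hw)
      refine le_of_tendsto_of_tendsto hcw tendsto_const_nhds ?_
      filter_upwards [eventually_mem_nhdsWithin] with w' hw'
      exact hEprop v hv w' hw'
    have hkey : ∀ v ∈ V, ∀ w ∈ V,
        ⟪surrogateOutcome ustar fstar r (x w), v⟫ - (c₁ + r * c₂) * p w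
          ≤ (u (x v) v - c₁ * p v) + r * (f (x v) v - c₂ * p v) := by
      intro v hv w hw
      have hcv : ContinuousWithinAt
          (fun v' => (u (x v') v' - c₁ * p v') + r * (f (x v') v' - c₂ * p v')) Eset v :=
        (hΨc v hv).mono hEsub
      have hcl : ContinuousWithinAt (fun v' =>
          ⟪surrogateOutcome ustar fstar r (x w), v'⟫ - (c₁ + r * c₂) * p w) Eset v :=
        ((continuous_const.inner continuous_id).sub continuous_const).continuousWithinAt
      haveI : (𝓝[Eset] v).NeBot := mem_closure_iff_nhdsWithin_neBot.mp (hVclE hv)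
      refine le_of_tendsto_of_tendsto hcl hcv ?_
      filter_upwards [eventually_mem_nhdsWithin] with v' hv'
      exact hE2 v' hv' w hw
    -- assemble the three conclusions
    have hconv2 : ∀ v ∈ V, ∀ v' ∈ V,
        surrogateUtility ustar fstar x p c₁ c₂ r v' - surrogateUtility ustar fstar x p c₁ c₂ r v
          ≤ ⟪surrogateOutcome ustar fstar r (x v'), v' - v⟫ := by
      intro v hv v' hv'
      have h1 := hkey v hv v' hv'
      have h2 := hUt_eq r v hv
      have h3 : surrogateUtility ustar fstar x p c₁ c₂ r v'
          = ⟪surrogateOutcome ustar fstar r (x v'), v'⟫ - (c₁ + r * c₂) * p v' := rfl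
      rw [inner_sub_right, h3, h2]
      linarith
    refine ⟨r, hr0, ?_, hconv2, hrbind⟩
    intro v hv
    have hcont : ContinuousAt (fun w => surrogateOutcome ustar fstar r (x w)) v := by
      have h1 : ContinuousAt (fun w => ustar (x w)) v := (hustardiff v hv).continuousAt
      have h2 : ContinuousAt (fun w => fstar (x w)) v := (hfstardiff v hv).continuousAt
      show ContinuousAt (fun w => ustar (x w) + r • fstar (x w)) v
      exact h1.add (h2.const_smul r)
    exact aux_gradient_of_convex hv hcont (fun a ha b hb => hconv2 a ha b hb)


  · -- backward direction
    rintro ⟨hC, r, hr0, hgrad, hconv, hbind⟩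
    refine ⟨hC, ?_⟩
    intro s hsm hsp hsV hsIU hsIF hoIU hoIF
    by_cases hFs : (∫ v in V, (∫ v' in V, (f (x v') v - c₂ * p v') ∂(s v)) ∂ρ) < C
    · exact Or.inr hFs
    push_neg at hFs
    left
    have key : ∀ v ∈ V, ∀ w ∈ V,
        (u (x w) v - c₁ * p w) + r * (f (x w) v - c₂ * p w)
          ≤ surrogateUtility ustar fstar x p c₁ c₂ r v := by
      intro v hv w hw
      have h2 := hconv v hv w hw
      rw [inner_sub_right] at h2
      have h3 := hW_eq r w hw v hv
      simp only [surrogateUtility] at h2 ⊢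
      linarith
    have hinner : ∀ v ∈ V,
        (∫ v' in V, (u (x v') v - c₁ * p v') ∂(s v))
            + r * (∫ v' in V, (f (x v') v - c₂ * p v') ∂(s v))
          ≤ surrogateUtility ustar fstar x p c₁ c₂ r v := by
      intro v hv
      have hP := hsp v hv
      have h1 : (s v) V = 1 := by
        have h := measure_add_measure_compl (μ := s v) hVm
        rw [hsV v hv, add_zero, measure_univ] at h
        exact h
      have hcomb : (∫ v' in V, ((u (x v') v - c₁ * p v') + r * (f (x v') v - c₂ * p v')) ∂(s v))
          = (∫ v' in V, (u (x v') v - c₁ * p v') ∂(s v))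
            + r * (∫ v' in V, (f (x v') v - c₂ * p v') ∂(s v)) := by
        rw [integral_add (hsIU v hv) ((hsIF v hv).const_mul r), integral_const_mul]
      rw [← hcomb]
      calc (∫ v' in V, ((u (x v') v - c₁ * p v') + r * (f (x v') v - c₂ * p v')) ∂(s v))
          ≤ ∫ _ in V, surrogateUtility ustar fstar x p c₁ c₂ r v ∂(s v) := by
            refine setIntegral_mono_on ((hsIU v hv).add ((hsIF v hv).const_mul r))
              (integrableOn_const (by rw [h1]; exact ENNReal.one_ne_top)) hVm ?_
            intro w hw
            exact key v hv w hw
        _ = surrogateUtility ustar fstar x p c₁ c₂ r v := by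
            rw [setIntegral_const, show (s v).real V = ((s v) V).toReal from rfl, h1]
            simp
    have hUt_int : IntegrableOn (surrogateUtility ustar fstar x p c₁ c₂ r) V ρ :=
      (hUtc r).integrableOn_compact hVc
    have houter : (∫ v in V, ((∫ v' in V, (u (x v') v - c₁ * p v') ∂(s v))
            + r * (∫ v' in V, (f (x v') v - c₂ * p v') ∂(s v))) ∂ρ)
          ≤ ∫ v in V, surrogateUtility ustar fstar x p c₁ c₂ r v ∂ρ :=
      setIntegral_mono_on (hoIU.add (hoIF.const_mul r)) hUt_int hVm hinner
    rw [integral_add hoIU (hoIF.const_mul r), integral_const_mul] at houter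
    have hUt_val : (∫ v in V, surrogateUtility ustar fstar x p c₁ c₂ r v ∂ρ)
        = (∫ v in V, (u (x v) v - c₁ * p v) ∂ρ) + r * (∫ v in V, (f (x v) v - c₂ * p v) ∂ρ) := by
      rw [setIntegral_congr_fun hVm (fun v hv => hUt_eq r v hv),
        integral_add hgUi (hgFi.const_mul r), integral_const_mul]
    rw [hUt_val] at houter
    rcases eq_or_lt_of_le hr0 with hr | hr
    · rw [← hr] at houter
      linarith
    · have hFb := hbind hr
      rw [hFb] at houter
      have : r * C ≤ r * (∫ v in V, (∫ v' in V, (f (x v') v - c₂ * p v') ∂(s v)) ∂ρ) :=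
        mul_le_mul_of_nonneg_left hFs hr0
      linarith
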